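/- The decomposition extension ⊑ of a well-founded partial order ≤ on a commutative monoid M is well-founded, where d ⊑' d' holds when d is obtained from a decomposition d' by replacing a nonempty sub-multiset of indecomposables {p₁,…,pₖ} of d' by decompositions d₁,…,dₖ of elements x₁,…,xₖ with xᵢ strictly below pᵢ. -/

import Mathlib

/-- Indecomposable element of a commutative monoid. -/
def Indec {M : Type*} [CommMonoid M] (p : M) : Prop :=
  p ≠ 1 ∧ ∀ x y : M, p = x * y → x = 1 ∨ y = 1

/-- A decomposition of m: a finite multiset of indecomposables with product m. -/
def IsDecomp {M : Type*} [CommMonoid M] (d : Multiset M) (m : M) : Prop :=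
  (∀ p ∈ d, Indec p) ∧ d.prod = m

/-- The (strict) decomposition extension of the order: d ⊏ d' holds when d is obtained
from d' by replacing a nonempty sub-multiset of indecomposables p₁,…,pₖ of d' by
decompositions d₁,…,dₖ of elements x₁,…,xₖ with xᵢ strictly below pᵢ. -/
def DecExt {M : Type*} [CommMonoid M] [PartialOrder M] (d d' : Multiset M) : Prop :=
  ∃ l : List (M × Multiset M), l ≠ [] ∧
    (∀ pr ∈ l, Indec pr.1 ∧ (∀ q ∈ pr.2, Indec q) ∧ pr.2.prod < pr.1) ∧
    ∃ rest : Multiset M,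
      d' = rest + (l.map Prod.fst : List M) ∧
      d = rest + (l.map Prod.snd).sum

section DM
variable {α : Type*} [Preorder α]

/-- One-step multiset replacement: remove one element, add a multiset of smaller ones. -/
def OneStep (N M : Multiset α) : Prop :=
  ∃ (a : α) (M' K : Multiset α), M = a ::ₘ M' ∧ N = M' + K ∧ ∀ b ∈ K, b < a

lemma acc_oneStep_cons (a : α) (ha : Acc (· < ·) a) :
    ∀ M : Multiset α, Acc (OneStep (α := α)) M → Acc (OneStep (α := α)) (a ::ₘ M) := by
  induction ha with
  | intro a _ iha =>
    intro M hM
    induction hM with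
    | intro M hMacc ihM =>
      have haccM : Acc (OneStep (α := α)) M := Acc.intro M hMacc
      refine Acc.intro _ ?_
      rintro N ⟨b, M', K, hM1, rfl, hK⟩
      rcases (Multiset.cons_eq_cons).1 hM1 with ⟨rfl, rfl⟩ | ⟨hne, u, hu1, hu2⟩
      · -- N = M + K, all elements of K are < a
        clear hM1
        have : ∀ K : Multiset α, (∀ b ∈ K, b < a) →
            ∀ M : Multiset α, Acc (OneStep (α := α)) M →
              Acc (OneStep (α := α)) (M + K) := by
          intro K
          induction K using Multiset.induction with
          | empty => intro _ M hM; simpa using hM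
          | cons k K' ihK =>
            intro hk M hM
            have : M + (k ::ₘ K') = k ::ₘ (M + K') := by
              rw [Multiset.add_cons]
            rw [this]
            exact iha k (hk k (Multiset.mem_cons_self _ _)) _
              (ihK (fun b hb => hk b (Multiset.mem_cons_of_mem hb)) M hM)
        exact this K hK M haccM
      · subst hu1; subst hu2
        have h := ihM (u + K) ⟨b, u, K, rfl, rfl, hK⟩
        simpa [Multiset.cons_add] using h

lemma oneStep_wf (h : WellFounded ((· < ·) : α → α → Prop)) :
    WellFounded (OneStep (α := α)) := by
  constructor
  intro M
  induction M using Multiset.induction with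
  | empty =>
    refine Acc.intro _ ?_
    rintro N ⟨a, M', K, hM1, -, -⟩
    exact absurd hM1.symm (Multiset.cons_ne_zero)
  | cons a M ih => exact acc_oneStep_cons a (h.apply a) M ih

end DM

/-- For a commutative monoid with a weak decomposition order in which every element
has a decomposition, the decomposition extension of the order is well-founded. -/
theorem decExt_wellFounded {M : Type*} [CommMonoid M] [PartialOrder M]
    (hwf : WellFounded ((· < ·) : M → M → Prop))
    (hbot : ∀ x : M, (1 : M) ≤ x)
    (hcomp : ∀ x y z : M, x ≤ y → x * z ≤ y * z)
    (hpre : ∀ x y z : M, x ≤ y * z → ∃ y' z', x = y' * z' ∧ y' ≤ y ∧ z' ≤ z)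
    (harch : ∀ x y : M, (∀ n : ℕ, x ^ n ≤ y) → x = 1)
    (hex : ∀ m : M, ∃ d : Multiset M, IsDecomp d m) :
    WellFounded (DecExt (M := M)) := by
  have le_prod : ∀ (s : Multiset M), ∀ q ∈ s, q ≤ s.prod := by
    intro s q hq
    obtain ⟨t, rfl⟩ := Multiset.exists_cons_of_mem hq
    rw [Multiset.prod_cons]
    calc q = 1 * q := (one_mul q).symm
    _ ≤ t.prod * q := hcomp 1 t.prod q (hbot _)
    _ = q * t.prod := mul_comm _ _
  have key : ∀ (l : List (M × Multiset M)), l ≠ [] →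
      (∀ pr ∈ l, pr.2.prod < pr.1) → ∀ rest : Multiset M,
      Relation.TransGen (OneStep (α := M))
        (rest + (l.map Prod.snd).sum) (rest + (l.map Prod.fst : List M)) := by
    intro l
    induction l with
    | nil => simp
    | cons pr l' ih =>
      intro _ hl rest
      have hlt : ∀ b ∈ pr.2, b < pr.1 := by
        intro b hb
        exact lt_of_le_of_lt (le_prod _ b hb) (hl pr List.mem_cons_self)
      have hstep : OneStep ((rest + pr.2) + (↑(l'.map Prod.fst) : Multiset M))
          (rest + (↑((pr :: l').map Prod.fst) : Multiset M)) :=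
        ⟨pr.1, rest + (↑(l'.map Prod.fst) : Multiset M), pr.2,
          by simp [← Multiset.cons_coe, Multiset.add_cons],
          by rw [add_right_comm], hlt⟩
      rcases eq_or_ne l' [] with rfl | hl'
      · refine Relation.TransGen.single ?_
        simpa using hstep
      · have ht := ih hl' (fun pr' h' => hl pr' (List.mem_cons_of_mem _ h')) (rest + pr.2)
        have : rest + ((pr :: l').map Prod.snd).sum
            = (rest + pr.2) + (l'.map Prod.snd).sum := by
          simp [add_assoc]
        rw [this]
        exact Relation.TransGen.tail ht hstep
  refine Subrelation.wf ?_ (oneStep_wf hwf).transGen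
  rintro d d' ⟨l, hne, hl, rest, rfl, rfl⟩
  exact key l hne (fun pr h => (hl pr h).2.2) rest
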